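/- Let d ≥ 1, q ≥ 2d, n ≥ 1 and k ≥ 2. Then the maximum cardinality α(C_{d,q}^n) of an independent set in the n-th strong product power of the circular graph C_{d,q} satisfies α(C_{d,q}^n) ≤ B_k^{L∞}(q,n,d). -/

import Mathlib

/-- The Lee weight of an element of `ZMod q`. -/
def leeWt (q : ℕ) (a : ZMod q) : ℕ := min a.val (q - a.val)

/-- The Lee-infinity distance `d_{L∞}(u,v) = max_i w_L(u_i − v_i)`. -/
def leeDistInf (q n : ℕ) (u v : Fin n → ZMod q) : ℕ :=
  Finset.univ.sup fun i => leeWt q (u i - v i)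

/-- `𝒞_k`: the codes `C ⊆ (ℤ/qℤ)^n` with `|C| ≤ k`. -/
abbrev CodesLe (q n k : ℕ) : Type _ := {C : Finset (Fin n → ZMod q) // C.card ≤ k}

/-- `𝒞_k(D)`: the codes `C ∈ 𝒞_k` with `C ⊇ D` and `|D| + 2|C∖D| ≤ k`. -/
abbrev SubCodes (q n k : ℕ) (D : CodesLe q n k) : Type _ :=
  {C : CodesLe q n k // D.1 ⊆ C.1 ∧ D.1.card + 2 * (C.1 \ D.1).card ≤ k}

lemma union_card_le {α : Type*} [DecidableEq α] {k : ℕ} {D C C' : Finset α}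
    (hC : D ⊆ C) (hC' : D ⊆ C')
    (h : D.card + 2 * (C \ D).card ≤ k) (h' : D.card + 2 * (C' \ D).card ≤ k) :
    (C ∪ C').card ≤ k := by
  have h1 : C ∪ C' ⊆ D ∪ (C \ D) ∪ (C' \ D) := by
    intro a ha
    simp only [Finset.mem_union, Finset.mem_sdiff] at *
    rcases ha with ha | ha
    · by_cases hD : a ∈ D
      · exact Or.inl (Or.inl hD)
      · exact Or.inl (Or.inr ⟨ha, hD⟩)
    · by_cases hD : a ∈ D
      · exact Or.inl (Or.inl hD)
      · exact Or.inr ⟨ha, hD⟩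
  have h2 := Finset.card_le_card h1
  have h3 := Finset.card_union_le (D ∪ (C \ D)) (C' \ D)
  have h4 := Finset.card_union_le D (C \ D)
  omega

/-- The matrix `M_{k,D}(x)` with entries `x(C ∪ C′)` for `C, C′ ∈ 𝒞_k(D)`. -/
def MkD (q n k : ℕ) (x : CodesLe q n k → ℝ) (D : CodesLe q n k) :
    Matrix (SubCodes q n k D) (SubCodes q n k D) ℝ :=
  fun C C' => x ⟨C.1.1 ∪ C'.1.1, union_card_le C.2.1 C'.2.1 C.2.2 C'.2.2⟩

/-- Feasibility for the level-`k` semidefinite program bounding `α(C_{d,q}^n)`: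
`x(∅) = 1`, `x(S) = 0` whenever `S` has minimum Lee-infinity distance `< d`, and every
matrix `M_{k,D}(x)` is positive semidefinite. -/
def FeasibleLinf (q n d k : ℕ) [NeZero q] (x : CodesLe q n k → ℝ) : Prop :=
  x ⟨∅, by simp⟩ = 1 ∧
  (∀ S : CodesLe q n k,
    (∃ u ∈ S.1, ∃ v ∈ S.1, u ≠ v ∧ leeDistInf q n u v < d) → x S = 0) ∧
  ∀ D : CodesLe q n k, (MkD q n k x D).PosSemidef

/-- The objective value `Σ_{v ∈ ℤ_q^n} x({v})`. -/
def objectiveLinf (q n k : ℕ) [NeZero q] (hk : 1 ≤ k) (x : CodesLe q n k → ℝ) : ℝ :=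
  ∑ v : Fin n → ZMod q, x ⟨{v}, by simpa using hk⟩

/-- The semidefinite programming bound `B_k^{L∞}(q,n,d)`. -/
noncomputable def BLinf (q n d k : ℕ) [NeZero q] (hk : 1 ≤ k) : ℝ :=
  sSup {y | ∃ x : CodesLe q n k → ℝ,
    FeasibleLinf q n d k x ∧ y = objectiveLinf q n k hk x}

/-- The independence number of a graph on `(ℤ/qℤ)^n`: the maximum cardinality of a set
of vertices no two of which are adjacent. -/
noncomputable def alphaIndep (q n : ℕ) (G : SimpleGraph (Fin n → ZMod q)) : ℕ :=
  sSup {m | ∃ S : Finset (Fin n → ZMod q), S.card = m ∧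
    ∀ u ∈ S, ∀ v ∈ S, u ≠ v → ¬ G.Adj u v}

-- AUX

lemma quad_of_psd {ι : Type*} [Fintype ι] [DecidableEq ι] {M : Matrix ι ι ℝ}
    (h : M.PosSemidef) (i j : ι) (t s : ℝ) :
    0 ≤ t * t * M i i + t * s * M i j + s * t * M j i + s * s * M j j := by
  have h2 := h.dotProduct_mulVec_nonneg ((Pi.single i t + Pi.single j s : ι → ℝ))
  simp only [Matrix.mulVec_add, dotProduct_add,
    add_dotProduct, Matrix.mulVec_single, dotProduct_single,
    single_dotProduct, star_add, star_trivial, Pi.smul_apply, Matrix.col_apply, op_smul_eq_mul] at h2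
  have he : t * t * M i i + t * s * M i j + s * t * M j i + s * s * M j j
      = t * (M i i * t) + s * (M j i * t) + (t * (M i j * s) + s * (M j j * s)) := by ring
  linarith [h2, he.ge]

lemma single_le_one_of_feasible (q n d k : ℕ) [NeZero q] (hk : 2 ≤ k)
    {x : CodesLe q n k → ℝ} (hx : FeasibleLinf q n d k x) (v : Fin n → ZMod q) :
    x ⟨{v}, by simp; omega⟩ ≤ 1 := by
  set a : ℝ := x ⟨{v}, by simp; omega⟩ with ha
  have hD : (∅ : Finset (Fin n → ZMod q)).card ≤ k := by simp
  set D : CodesLe q n k := ⟨∅, hD⟩ with hDdef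
  have hpsd := hx.2.2 D
  have hCi : D.1 ⊆ (∅ : Finset (Fin n → ZMod q)) ∧
      D.1.card + 2 * ((∅ : Finset (Fin n → ZMod q)) \ D.1).card ≤ k := by
    constructor
    · simp [hDdef]
    · simp [hDdef]
  have hCj : D.1 ⊆ ({v} : Finset (Fin n → ZMod q)) ∧
      D.1.card + 2 * (({v} : Finset (Fin n → ZMod q)) \ D.1).card ≤ k := by
    constructor
    · simp [hDdef]
    · simp [hDdef]; omega
  set i : SubCodes q n k D := ⟨⟨∅, hD⟩, hCi⟩ with hi
  set j : SubCodes q n k D := ⟨⟨{v}, by simp; omega⟩, hCj⟩ with hj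
  have hMii : MkD q n k x D i i = 1 := by
    have : MkD q n k x D i i = x ⟨∅, by simp⟩ := congrArg x (Subtype.ext (by simp [MkD, hi]))
    rw [this, hx.1]
  have hMij : MkD q n k x D i j = a := congrArg x (Subtype.ext (by simp [MkD, hi, hj]))
  have hMji : MkD q n k x D j i = a := congrArg x (Subtype.ext (by simp [MkD, hi, hj]))
  have hMjj : MkD q n k x D j j = a := congrArg x (Subtype.ext (by simp [MkD, hj]))
  have h1 := quad_of_psd hpsd i j a (-1)
  have h2 := quad_of_psd hpsd i j 0 1
  rw [hMii, hMij, hMji, hMjj] at h1 h2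
  nlinarith [h1, h2]

/-- for `d ≥ 1`, `q ≥ 2d`, `n ≥ 1` and `k ≥ 2`, the independence number
of the `n`-th strong product power of the circular graph `C_{d,q}` is at most
`B_k^{L∞}(q,n,d)`. -/
theorem stmt19 (q n d k : ℕ) [NeZero q] (hd : 1 ≤ d) (hq : 2 * d ≤ q) (hn : 1 ≤ n)
    (hk : 2 ≤ k)
    (G : SimpleGraph (Fin n → ZMod q))
    (hG : ∀ u v, G.Adj u v ↔ u ≠ v ∧ ∀ i, u i = v i ∨ leeWt q (u i - v i) < d) :
    (alphaIndep q n G : ℝ) ≤ BLinf q n d k (by omega) := by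
  -- the independence number is attained
  set A := {m | ∃ S : Finset (Fin n → ZMod q), S.card = m ∧
    ∀ u ∈ S, ∀ v ∈ S, u ≠ v → ¬ G.Adj u v} with hA
  have h0 : 0 ∈ A := ⟨∅, by simp⟩
  have hbddA : BddAbove A := by
    refine ⟨Fintype.card (Fin n → ZMod q), ?_⟩
    rintro m ⟨S, hS, -⟩
    exact hS ▸ S.card_le_univ
  have hmem : sSup A ∈ A := Nat.sSup_mem ⟨0, h0⟩ hbddA
  obtain ⟨S, hScard, hSind⟩ := hmem
  -- the indicator solution
  set x : CodesLe q n k → ℝ := fun C => if C.1 ⊆ S then 1 else 0 with hxdef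
  have hfeas : FeasibleLinf q n d k x := by
    refine ⟨by simp [hxdef], ?_, ?_⟩
    · rintro S' ⟨u, hu, v, hv, huv, hdist⟩
      rw [hxdef]
      simp only
      rw [if_neg]
      intro hsub
      refine hSind u (hsub hu) v (hsub hv) huv ?_
      rw [hG]
      refine ⟨huv, fun i => Or.inr ?_⟩
      simp only [leeDistInf] at hdist
      exact lt_of_le_of_lt
        (Finset.le_sup (f := fun i => leeWt q (u i - v i)) (Finset.mem_univ i)) hdist
    · intro D
      set u : SubCodes q n k D → ℝ := fun C => if C.1.1 ⊆ S then 1 else 0 with hudef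
      have hM : MkD q n k x D = fun C C' => u C * u C' := by
        funext C C'
        simp only [MkD, hxdef, hudef, Finset.union_subset_iff]
        by_cases h1 : C.1.1 ⊆ S <;> by_cases h2 : C'.1.1 ⊆ S <;> simp [h1, h2]
      rw [hM]
      refine Matrix.PosSemidef.of_dotProduct_mulVec_nonneg ?_ ?_
      · exact Matrix.ext fun a b => by show star (u b * u a) = u a * u b; rw [star_trivial, mul_comm]
      · intro y
        have : dotProduct (star y) (Matrix.mulVec (fun C C' => u C * u C') y)
            = (∑ C, u C * y C) * (∑ C, u C * y C) := by
          simp only [star_trivial, Matrix.mulVec, dotProduct]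
          rw [Finset.sum_mul_sum]
          refine Finset.sum_congr rfl fun C _ => ?_
          rw [Finset.mul_sum]
          exact Finset.sum_congr rfl fun C' _ => by ring
        rw [this]
        exact mul_self_nonneg _
  have hobj : objectiveLinf q n k (by omega) x = (S.card : ℝ) := by
    rw [objectiveLinf]
    have : ∀ v : Fin n → ZMod q,
        x ⟨{v}, by simp; omega⟩ = if v ∈ S then (1:ℝ) else 0 := by
      intro v
      simp [hxdef, Finset.singleton_subset_iff]
    simp only [this]
    rw [Finset.sum_boole]
    congr 1
    rw [Finset.filter_mem_eq_inter, Finset.univ_inter]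
  -- boundedness of the feasible objective values
  have hbdd : BddAbove {y | ∃ x : CodesLe q n k → ℝ,
      FeasibleLinf q n d k x ∧ y = objectiveLinf q n k (by omega : 1 ≤ k) x} := by
    refine ⟨(Fintype.card (Fin n → ZMod q) : ℝ), ?_⟩
    rintro y ⟨x', hx', rfl⟩
    rw [objectiveLinf]
    calc ∑ v : Fin n → ZMod q, x' ⟨{v}, by simp; omega⟩
        ≤ ∑ _v : Fin n → ZMod q, (1:ℝ) :=
          Finset.sum_le_sum fun v _ => single_le_one_of_feasible q n d k hk hx' v
      _ = (Fintype.card (Fin n → ZMod q) : ℝ) := by simp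
  have hle : (alphaIndep q n G : ℝ) ≤ objectiveLinf q n k (by omega) x := by
    rw [hobj, alphaIndep, ← hA, ← hScard]
  exact le_trans hle (le_csSup hbdd ⟨x, hfeas, rfl⟩)
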